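/- Let r ∈ ℕ, let (a_0, …, a_r) be 𝓑_r-data on a ℂ-vector space M, and let λ ∈ ℂ \ {0}, β ∈ ℂ. For the operators D_m of F(M, Ω(λ,β)) on M ⊗ ℂ[t] the following hold for all m, n ∈ ℤ and all v ∈ M: (i) the range of D_0 − n·id equals M ⊗ (t − n)ℂ[t]; (ii) D_m maps M ⊗ (t − n)ℂ[t] into M ⊗ (t − n − m)ℂ[t]; (iii) D_m(v ⊗ λ^n·1) − ((n + (1−β)m)·v + g(m)v) ⊗ λ^{n+m}·1 ∈ M ⊗ (t − n − m)ℂ[t]. Consequently 𝔚(F(M, Ω(λ,β))) ≅ F(M, A(0, 1−β)) as Virasoro modules. -/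

import Mathlib

open Polynomial TensorProduct DirectSum

/-- The shift operator `f(t) ↦ f(t - m)` on `ℂ[t]`. -/
noncomputable def shiftOp (m : ℤ) : Module.End ℂ (Polynomial ℂ) :=
  (Polynomial.aeval (Polynomial.X - Polynomial.C (m : ℂ))).toLinearMap

/-- The operator `X_m^λ : f(t) ↦ λ^m f(t - m)` of `Ω(λ,β)`. -/
noncomputable def XOp (l : ℂ) (m : ℤ) : Module.End ℂ (Polynomial ℂ) :=
  (l ^ m) • shiftOp m

/-- The operator `D_m^{λ,β} : f(t) ↦ λ^m (t - βm) f(t - m)` of `Ω(λ,β)`. -/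
noncomputable def DOp (l b : ℂ) (m : ℤ) : Module.End ℂ (Polynomial ℂ) :=
  (l ^ m) • ((LinearMap.mulLeft ℂ (Polynomial.X - Polynomial.C (b * (m : ℂ)))) ∘ₗ shiftOp m)

/-- `𝓑_r`-data on a ℂ-vector space `M`. -/
structure BrData (r : ℕ) (M : Type*) [AddCommGroup M] [Module ℂ M] where
  a : Fin (r + 1) → Module.End ℂ M
  rel : ∀ i j : Fin (r + 1), ∀ h : (i : ℕ) + (j : ℕ) ≤ r,
    a i * a j - a j * a i
      = (((j : ℕ) : ℂ) - ((i : ℕ) : ℂ)) • a ⟨(i : ℕ) + (j : ℕ), Nat.lt_succ_of_le h⟩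
  comm : ∀ i j : Fin (r + 1), r < (i : ℕ) + (j : ℕ) → a i * a j = a j * a i

/-- The operator `g(m) = Σ_{i=0}^r (m^{i+1}/(i+1)!)·a_i`. -/
noncomputable def gOp {r : ℕ} {M : Type*} [AddCommGroup M] [Module ℂ M]
    (B : BrData r M) (m : ℤ) : Module.End ℂ M :=
  ∑ i : Fin (r + 1), (((m : ℂ) ^ ((i : ℕ) + 1)) / (Nat.factorial ((i : ℕ) + 1) : ℂ)) • B.a i

/-- The operator `D_m` of the Virasoro module `F(M, Ω(λ,β)) = M ⊗ ℂ[t]`: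
`D_m(v ⊗ f) = v ⊗ λ^m(t − βm)f(t − m) + g(m)v ⊗ λ^m f(t − m)`. -/
noncomputable def DF {r : ℕ} {M : Type*} [AddCommGroup M] [Module ℂ M]
    (B : BrData r M) (l b : ℂ) (m : ℤ) : Module.End ℂ (M ⊗[ℂ] Polynomial ℂ) :=
  TensorProduct.map LinearMap.id (DOp l b m) + TensorProduct.map (gOp B m) (XOp l m)

/-- The ideal `(t − n)·ℂ[t]` viewed as a ℂ-subspace of `ℂ[t]`. -/
noncomputable def Isub (n : ℤ) : Submodule ℂ (Polynomial ℂ) :=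
  (Ideal.span {Polynomial.X - Polynomial.C ((n : ℤ) : ℂ)}).restrictScalars ℂ

/-- The subspace `M ⊗ (t − n)ℂ[t]` of `M ⊗ ℂ[t]`. -/
noncomputable def Iten (M : Type*) [AddCommGroup M] [Module ℂ M] (n : ℤ) :
    Submodule ℂ (M ⊗[ℂ] Polynomial ℂ) :=
  LinearMap.range (LinearMap.lTensor M (Isub n).subtype)

/-! ### Auxiliary lemmas -/

section Aux

variable {r : ℕ} {M : Type*} [AddCommGroup M] [Module ℂ M]

lemma shiftOp_eval (m : ℤ) (f : Polynomial ℂ) (a : ℂ) :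
    (shiftOp m f).eval a = f.eval (a - m) := by
  simp only [shiftOp, AlgHom.toLinearMap_apply, ← Polynomial.comp_eq_aeval, Polynomial.eval_comp]
  simp

lemma mem_Isub {n : ℤ} {p : Polynomial ℂ} : p ∈ Isub n ↔ p.eval (n : ℂ) = 0 := by
  rw [Isub, Submodule.restrictScalars_mem, Ideal.mem_span_singleton, Polynomial.dvd_iff_isRoot]
  rfl

lemma DOp_eval (l b : ℂ) (m : ℤ) (f : Polynomial ℂ) (a : ℂ) :
    (DOp l b m f).eval a = l ^ m * ((a - b * m) * f.eval (a - m)) := by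
  simp [DOp, shiftOp_eval, mul_comm]

lemma XOp_eval (l : ℂ) (m : ℤ) (f : Polynomial ℂ) (a : ℂ) :
    (XOp l m f).eval a = l ^ m * f.eval (a - m) := by
  simp [XOp, shiftOp_eval]

lemma DOp_maps (l b : ℂ) (m n : ℤ) {p : Polynomial ℂ} (hp : p ∈ Isub n) :
    DOp l b m p ∈ Isub (n + m) := by
  rw [mem_Isub] at hp ⊢
  rw [DOp_eval]
  push_cast
  simp [add_sub_cancel_right, hp]

lemma XOp_maps (l : ℂ) (m n : ℤ) {p : Polynomial ℂ} (hp : p ∈ Isub n) :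
    XOp l m p ∈ Isub (n + m) := by
  rw [mem_Isub] at hp ⊢
  rw [XOp_eval]
  push_cast
  simp [add_sub_cancel_right, hp]

lemma tmul_mem_Iten (n : ℤ) (v : M) {p : Polynomial ℂ} (hp : p ∈ Isub n) :
    v ⊗ₜ[ℂ] p ∈ Iten M n :=
  ⟨v ⊗ₜ[ℂ] (⟨p, hp⟩ : Isub n), by simp [LinearMap.lTensor_tmul]⟩

lemma map_maps_Iten {h : Module.End ℂ M} {f : Module.End ℂ (Polynomial ℂ)} {n p : ℤ}
    (hf : ∀ q ∈ Isub n, f q ∈ Isub p) {u : M ⊗[ℂ] Polynomial ℂ} (hu : u ∈ Iten M n) :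
    TensorProduct.map h f u ∈ Iten M p := by
  obtain ⟨w, rfl⟩ := hu
  set f' : Isub n →ₗ[ℂ] Isub p := (f ∘ₗ (Isub n).subtype).codRestrict _ (fun q => hf q q.2)
  have hc : TensorProduct.map h f ∘ₗ LinearMap.lTensor M (Isub n).subtype
      = LinearMap.lTensor M (Isub p).subtype ∘ₗ TensorProduct.map h f' := by
    rw [LinearMap.lTensor, LinearMap.lTensor, ← TensorProduct.map_comp, ← TensorProduct.map_comp]
    rfl
  have h2 := congrFun (congrArg DFunLike.coe hc) w
  simp only [LinearMap.comp_apply] at h2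
  rw [h2]
  exact ⟨_, rfl⟩

lemma range_lTensor_mulLeft (n : ℤ) :
    LinearMap.range (LinearMap.lTensor M (LinearMap.mulLeft ℂ (X - C ((n:ℤ):ℂ)))) = Iten M n := by
  set g := LinearMap.mulLeft ℂ (X - C ((n:ℤ):ℂ))
  have hmem : ∀ p : Polynomial ℂ, g p ∈ Isub n := fun p =>
    Submodule.restrictScalars_mem _ _ _ |>.mpr (Ideal.mem_span_singleton.mpr (dvd_mul_right _ p))
  set g' : Polynomial ℂ →ₗ[ℂ] Isub n := g.codRestrict _ hmem
  have hsurj : Function.Surjective g' := by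
    rintro ⟨q, hq⟩
    rw [Isub, Submodule.restrictScalars_mem, Ideal.mem_span_singleton] at hq
    obtain ⟨p, hp⟩ := hq
    exact ⟨p, Subtype.ext hp.symm⟩
  have hfac : LinearMap.lTensor M g
      = LinearMap.lTensor M (Isub n).subtype ∘ₗ LinearMap.lTensor M g' := by
    rw [← LinearMap.lTensor_comp]; rfl
  rw [hfac, LinearMap.range_comp_of_range_eq_top]
  · rfl
  · exact LinearMap.range_eq_top.mpr (LinearMap.lTensor_surjective M hsurj)

lemma gOp_zero (B : BrData r M) : gOp B 0 = 0 := by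
  unfold gOp
  apply Finset.sum_eq_zero
  intro i _
  simp

lemma shiftOp_zero : shiftOp 0 = LinearMap.id := by
  unfold shiftOp
  ext f
  simp [Polynomial.aeval_X_left]

lemma DF_zero (B : BrData r M) (l b : ℂ) :
    DF B l b 0 = LinearMap.lTensor M (LinearMap.mulLeft ℂ (X : Polynomial ℂ)) := by
  unfold DF
  rw [gOp_zero]
  have h1 : DOp l b 0 = LinearMap.mulLeft ℂ (X : Polynomial ℂ) := by
    unfold DOp
    rw [shiftOp_zero]
    simp
  rw [h1]
  have h2 : TensorProduct.map (0 : Module.End ℂ M) (XOp l 0) = 0 := by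
    ext v f
    simp
  rw [h2, add_zero]
  rfl

lemma DF_zero_sub (B : BrData r M) (l b : ℂ) (n : ℤ) :
    DF B l b 0 - (n : ℂ) • (1 : Module.End ℂ (M ⊗[ℂ] Polynomial ℂ))
      = LinearMap.lTensor M (LinearMap.mulLeft ℂ (X - C ((n:ℤ):ℂ))) := by
  rw [DF_zero]
  have h : LinearMap.mulLeft ℂ (X - C ((n:ℤ):ℂ))
      = LinearMap.mulLeft ℂ (X : Polynomial ℂ) - (n : ℂ) • LinearMap.id := by
    ext f
    simp [sub_mul, Polynomial.smul_eq_C_mul]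
  rw [h, LinearMap.lTensor_sub, LinearMap.lTensor_smul, LinearMap.lTensor_id]
  rfl

lemma shiftOp_C (m : ℤ) (c : ℂ) : shiftOp m (C c) = C c := by
  simp [shiftOp]

/-- `f ↦ (λ^{-n} f(n)) • T^n`. -/
noncomputable def phiL (l : ℂ) (n : ℤ) : Polynomial ℂ →ₗ[ℂ] LaurentPolynomial ℂ :=
  LinearMap.toSpanSingleton ℂ _ (LaurentPolynomial.T n) ∘ₗ
    ((l ^ (-n)) • Polynomial.leval ((n : ℤ) : ℂ))

lemma phiL_apply (l : ℂ) (n : ℤ) (f : Polynomial ℂ) :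
    phiL l n f = (l ^ (-n) * f.eval ((n : ℤ) : ℂ)) • LaurentPolynomial.T n := by
  simp [phiL, LinearMap.toSpanSingleton_apply, smul_eq_mul]

/-- `v ⊗ f ↦ (λ^{-n} f(n)) • (v ⊗ T^n)`. -/
noncomputable def psiL (M : Type*) [AddCommGroup M] [Module ℂ M] (l : ℂ) (n : ℤ) :
    M ⊗[ℂ] Polynomial ℂ →ₗ[ℂ] M ⊗[ℂ] LaurentPolynomial ℂ :=
  LinearMap.lTensor M (phiL l n)

lemma psiL_tmul (l : ℂ) (n : ℤ) (v : M) (f : Polynomial ℂ) :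
    psiL M l n (v ⊗ₜ[ℂ] f)
      = (l ^ (-n) * f.eval ((n : ℤ) : ℂ)) • (v ⊗ₜ[ℂ] LaurentPolynomial.T n) := by
  simp [psiL, LinearMap.lTensor_tmul, phiL_apply]

lemma Iten_le_ker_psiL (l : ℂ) (n : ℤ) : Iten M n ≤ LinearMap.ker (psiL M l n) := by
  rintro u ⟨w, rfl⟩
  have hz : psiL M l n ∘ₗ LinearMap.lTensor M (Isub n).subtype = 0 := by
    rw [psiL, ← LinearMap.lTensor_comp]
    have hphi : phiL l n ∘ₗ (Isub n).subtype = 0 := by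
      ext p
      simp [phiL_apply, mem_Isub.mp p.2]
    rw [hphi, LinearMap.lTensor_zero]
  rw [LinearMap.mem_ker]
  simpa using congrFun (congrArg DFunLike.coe hz) w

/-- The forward map of the equivalence. -/
noncomputable def Emap (M : Type*) [AddCommGroup M] [Module ℂ M] (l : ℂ) :
    (⨁ n : ℤ, (M ⊗[ℂ] Polynomial ℂ) ⧸ Iten M n) →ₗ[ℂ] M ⊗[ℂ] LaurentPolynomial ℂ :=
  DirectSum.toModule ℂ ℤ _ (fun n => (Iten M n).liftQ (psiL M l n) (Iten_le_ker_psiL l n))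

lemma Emap_lof_mk (l : ℂ) (n : ℤ) (u : M ⊗[ℂ] Polynomial ℂ) :
    Emap M l (DirectSum.lof ℂ ℤ (fun k => (M ⊗[ℂ] Polynomial ℂ) ⧸ Iten M k) n
        (Submodule.Quotient.mk u)) = psiL M l n u := by
  simp [Emap, DirectSum.toModule_lof]

/-- `v ↦ class of v ⊗ λ^n` in the `n`-th summand. -/
noncomputable def Hmap (M : Type*) [AddCommGroup M] [Module ℂ M] (l : ℂ) (n : ℤ) :
    M →ₗ[ℂ] ⨁ k : ℤ, (M ⊗[ℂ] Polynomial ℂ) ⧸ Iten M k :=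
  DirectSum.lof ℂ ℤ (fun k => (M ⊗[ℂ] Polynomial ℂ) ⧸ Iten M k) n ∘ₗ
    (Iten M n).mkQ ∘ₗ (TensorProduct.mk ℂ M (Polynomial ℂ)).flip (C (l ^ n))

/-- The inverse map of the equivalence. -/
noncomputable def Fmap (M : Type*) [AddCommGroup M] [Module ℂ M] (l : ℂ) :
    M ⊗[ℂ] LaurentPolynomial ℂ →ₗ[ℂ] ⨁ k : ℤ, (M ⊗[ℂ] Polynomial ℂ) ⧸ Iten M k :=
  TensorProduct.lift (LinearMap.flip
    ((Finsupp.lsum ℂ (fun n => LinearMap.toSpanSingleton ℂ _ (Hmap M l n))) ∘ₗ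
      (AddMonoidAlgebra.coeffLinearEquiv ℂ).toLinearMap))

lemma Fmap_tmul_single (l : ℂ) (v : M) (n : ℤ) (c : ℂ) :
    Fmap M l (v ⊗ₜ[ℂ] (AddMonoidAlgebra.single n c : LaurentPolynomial ℂ))
      = c • (DirectSum.lof ℂ ℤ (fun k => (M ⊗[ℂ] Polynomial ℂ) ⧸ Iten M k) n
          (Submodule.Quotient.mk (v ⊗ₜ[ℂ] C (l ^ n)))) := by
  rw [Fmap, TensorProduct.lift.tmul]
  simp only [LinearMap.flip_apply, LinearMap.comp_apply, LinearEquiv.coe_coe,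
    AddMonoidAlgebra.coeffLinearEquiv_apply, AddMonoidAlgebra.coeff_single]
  erw [Finsupp.lsum_single]
  simp only [LinearMap.toSpanSingleton_apply,
    LinearMap.smul_apply, Hmap, LinearMap.comp_apply, TensorProduct.mk_apply,
    Submodule.mkQ_apply]
  rfl

lemma T_eq_single (n : ℤ) : (LaurentPolynomial.T n : LaurentPolynomial ℂ) = AddMonoidAlgebra.single n 1 :=
  rfl

lemma mk_eq_mk_C (n : ℤ) (v : M) (f : Polynomial ℂ) :
    (Submodule.Quotient.mk (v ⊗ₜ[ℂ] f) : (M ⊗[ℂ] Polynomial ℂ) ⧸ Iten M n)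
      = Submodule.Quotient.mk (v ⊗ₜ[ℂ] C (f.eval ((n : ℤ) : ℂ))) := by
  rw [Submodule.Quotient.eq, ← TensorProduct.tmul_sub]
  refine tmul_mem_Iten n v ?_
  rw [mem_Isub]
  simp

end Aux

theorem weighting_of_F_omega {r : ℕ} {M : Type*} [AddCommGroup M] [Module ℂ M]
    (B : BrData r M) (l : ℂ) (hl : l ≠ 0) (b : ℂ) :
    (∀ n : ℤ, LinearMap.range (DF B l b 0 - (n : ℂ) • (1 : Module.End ℂ (M ⊗[ℂ] Polynomial ℂ)))
        = Iten M n) ∧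
    (∀ m n : ℤ, ∀ u ∈ Iten M n, DF B l b m u ∈ Iten M (n + m)) ∧
    (∀ m n : ℤ, ∀ v : M,
      DF B l b m (v ⊗ₜ[ℂ] Polynomial.C (l ^ n))
          - ((((n : ℂ) + (1 - b) * (m : ℂ)) • v + gOp B m v) ⊗ₜ[ℂ] Polynomial.C (l ^ (n + m)))
        ∈ Iten M (n + m)) ∧
    (∀ DA : ℤ → Module.End ℂ (M ⊗[ℂ] LaurentPolynomial ℂ),
      -- `DA` is the family of operators of `F(M, A(0, 1−β))` on `M ⊗ ℂ[x,x⁻¹]`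
      (∀ (m n : ℤ) (v : M),
          DA m (v ⊗ₜ[ℂ] LaurentPolynomial.T n)
            = ((((n : ℂ) + 0 + (1 - b) * (m : ℂ)) • v + gOp B m v)
                ⊗ₜ[ℂ] LaurentPolynomial.T (n + m))) →
      ∀ h : (∀ m n p : ℤ, n + m = p → Iten M n ≤ (Iten M p).comap (DF B l b m)),
        ∃ e : (⨁ n : ℤ, (M ⊗[ℂ] Polynomial ℂ) ⧸ Iten M n) ≃ₗ[ℂ] M ⊗[ℂ] LaurentPolynomial ℂ,
          ∀ m : ℤ,
            e.toLinearMap ∘ₗ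
              (DirectSum.toModule ℂ ℤ _ (fun n =>
                (DirectSum.lof ℂ ℤ (fun k => (M ⊗[ℂ] Polynomial ℂ) ⧸ Iten M k) (n + m)) ∘ₗ
                  Submodule.mapQ (Iten M n) (Iten M (n + m)) (DF B l b m) (h m n (n + m) rfl)))
            = DA m ∘ₗ e.toLinearMap) := by
  refine ⟨?_, ?_, ?_, ?_⟩
  · intro n
    rw [DF_zero_sub, range_lTensor_mulLeft]
  · intro m n u hu
    rw [DF, LinearMap.add_apply]
    exact Submodule.add_mem _
      (map_maps_Iten (fun q hq => DOp_maps l b m n hq) hu)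
      (map_maps_Iten (fun q hq => XOp_maps l m n hq) hu)
  · intro m n v
    have key : DF B l b m (v ⊗ₜ[ℂ] Polynomial.C (l ^ n))
          - ((((n : ℂ) + (1 - b) * (m : ℂ)) • v + gOp B m v) ⊗ₜ[ℂ] Polynomial.C (l ^ (n + m)))
        = v ⊗ₜ[ℂ] ((l ^ (n + m)) • (X - C ((n : ℂ) + (m : ℂ)))) := by
      simp only [DF, LinearMap.add_apply, TensorProduct.map_tmul, LinearMap.id_coe, id_eq,
        DOp, XOp, LinearMap.smul_apply, LinearMap.comp_apply, shiftOp_C,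
        LinearMap.mulLeft_apply, TensorProduct.add_tmul]
      rw [smul_tmul]
      have e1 : (l ^ m : ℂ) • (C (l ^ n) : Polynomial ℂ) = C (l ^ (n + m)) := by
        rw [Polynomial.smul_C, smul_eq_mul, mul_comm, ← zpow_add₀ hl]
      rw [e1, add_sub_add_right_eq_sub, ← TensorProduct.tmul_sub]
      congr 1
      rw [zpow_add₀ hl]
      simp only [Polynomial.smul_eq_C_mul, map_mul, map_add, map_sub, map_one]
      ring
    rw [key]
    refine tmul_mem_Iten _ _ ?_
    rw [mem_Isub]
    push_cast
    simp
  · intro DA hDA h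
    have single_eq : ∀ (n : ℤ) (c : ℂ),
        (AddMonoidAlgebra.single n c : LaurentPolynomial ℂ) = c • LaurentPolynomial.T n := by
      intro n c
      rw [LaurentPolynomial.single_eq_C_mul_T, ← smul_eq_mul, LaurentPolynomial.C_eq_algebraMap,
        algebraMap_smul]
    have zcancel : ∀ n : ℤ, l ^ (-n) * l ^ n = 1 := fun n => by
      rw [← zpow_add₀ hl, neg_add_cancel, zpow_zero]
    -- Emap ∘ Fmap = id
    have hEF : Emap M l ∘ₗ Fmap M l = LinearMap.id := by
      apply TensorProduct.ext
      apply LinearMap.ext; intro v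
      refine AddMonoidAlgebra.lhom_ext' fun n => LinearMap.ext fun c => ?_
      show (Emap M l) ((Fmap M l) (v ⊗ₜ[ℂ] (AddMonoidAlgebra.single n c : LaurentPolynomial ℂ)))
        = v ⊗ₜ[ℂ] (AddMonoidAlgebra.single n c : LaurentPolynomial ℂ)
      rw [Fmap_tmul_single, map_smul, Emap_lof_mk, psiL_tmul]
      rw [Polynomial.eval_C, zcancel, one_smul, single_eq, TensorProduct.tmul_smul]
    -- Fmap ∘ Emap = id
    have hFE : Fmap M l ∘ₗ Emap M l = LinearMap.id := by
      apply DirectSum.linearMap_ext ℂ; intro n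
      refine Submodule.linearMap_qext (τ₁₂ := RingHom.id ℂ) (M₂ := ⨁ k : ℤ, (M ⊗[ℂ] Polynomial ℂ) ⧸ Iten M k) (Iten M n) ?_
      refine TensorProduct.ext' fun v f => ?_
      simp only [LinearMap.comp_apply, Submodule.mkQ_apply, LinearMap.id_apply]
      rw [Emap_lof_mk, psiL_tmul, map_smul, T_eq_single, Fmap_tmul_single, one_smul]
      rw [← map_smul, ← Submodule.Quotient.mk_smul]
      have hs : (l ^ (-n) * eval ((n : ℤ) : ℂ) f) • (v ⊗ₜ[ℂ] C (l ^ n) : M ⊗[ℂ] Polynomial ℂ)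
          = v ⊗ₜ[ℂ] C (eval ((n : ℤ) : ℂ) f) := by
        rw [TensorProduct.smul_tmul', TensorProduct.smul_tmul, Polynomial.smul_C, smul_eq_mul]
        congr 2
        rw [mul_comm (l ^ (-n)) (eval ((n : ℤ) : ℂ) f), mul_assoc, zcancel, mul_one]
      rw [hs, ← mk_eq_mk_C]
    refine ⟨LinearEquiv.ofLinear (Emap M l) (Fmap M l) hEF hFE, ?_⟩
    intro m
    rw [LinearEquiv.ofLinear_toLinearMap]
    apply DirectSum.linearMap_ext ℂ; intro n
    refine Submodule.linearMap_qext (τ₁₂ := RingHom.id ℂ) (M₂ := M ⊗[ℂ] LaurentPolynomial ℂ) (Iten M n) ?_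
    refine TensorProduct.ext' fun v f => ?_
    simp only [LinearMap.comp_apply, Submodule.mkQ_apply, DirectSum.toModule_lof,
      Submodule.mapQ_apply]
    have hDFt : DF B l b m (v ⊗ₜ[ℂ] f)
        = v ⊗ₜ[ℂ] (DOp l b m f) + (gOp B m v) ⊗ₜ[ℂ] (XOp l m f) := by
      simp [DF]
    rw [hDFt, ← Submodule.mkQ_apply (Iten M (n + m))]
    simp only [map_add, Submodule.mkQ_apply]
    rw [Emap_lof_mk, Emap_lof_mk, Emap_lof_mk, psiL_tmul, psiL_tmul, psiL_tmul, map_smul, hDA]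
    rw [DOp_eval, XOp_eval]
    push_cast
    rw [add_sub_cancel_right]
    rw [TensorProduct.add_tmul, smul_add, ← TensorProduct.smul_tmul', smul_smul]
    have key2 : l ^ (-(n + m)) * l ^ m = l ^ (-n) := by
      rw [neg_add, zpow_add₀ hl, mul_assoc, zcancel, mul_one]
    congr 1
    · congr 1
      rw [← mul_assoc, key2]
      ring
    · congr 1
      rw [← mul_assoc, key2]
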